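/- arXiv:1710.02058 — 3 statements merged into one kernel-verified Lean document; each statement's English description precedes it below -/
import Mathlib

section
/- Let ℓ, m ≥ 1 and let v_1,…,v_m : Fin ℓ → ℝ be vectors all of whose entries lie in {0, 2}. Define the row points r_i ∈ ℝ^m by (r_i)_j = (v_j)_i for i ∈ Fin ℓ, and the unit points e_j ∈ ℝ^m with (e_j)_j = 1 and (e_j)_{j'} = 0 for j' ≠ j. Let X = {r_i : i ∈ Fin ℓ} ∪ {e_j : j ∈ Fin m}. Then for every j, the point e_j belongs to the skyline of X if and only if v_j is the all-zero vector. -/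
/-- `q` strictly dominates `p` if `q` is at least `p` in every coordinate and
strictly larger in at least one coordinate. -/
def StrictlyDominates {m : ℕ} (q p : Fin m → ℝ) : Prop :=
  (∀ j, p j ≤ q j) ∧ ∃ j, p j < q j

/-- The skyline of a set of points: those points not strictly dominated by any
other point of the set. -/
def skyline {m : ℕ} (X : Set (Fin m → ℝ)) : Set (Fin m → ℝ) :=
  {p ∈ X | ∀ q ∈ X, ¬ StrictlyDominates q p}

/-- One block of the lower-bound reduction: the unit point `e j` is a skyline
point of the block iff the vector `v j` is the all-zero vector. -/
theorem unit_point_in_skyline_iff_null_vector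
    (ℓ m : ℕ) (hℓ : 1 ≤ ℓ) (hm : 1 ≤ m)
    (v : Fin m → Fin ℓ → ℝ)
    (hv : ∀ j i, v j i = 0 ∨ v j i = 2)
    (r : Fin ℓ → Fin m → ℝ) (hr : ∀ i j, r i j = v j i)
    (e : Fin m → Fin m → ℝ)
    (he : ∀ j j', e j j' = if j' = j then 1 else 0)
    (X : Set (Fin m → ℝ))
    (hX : X = {x | ∃ i, x = r i} ∪ {x | ∃ j, x = e j}) :
    ∀ j, e j ∈ skyline X ↔ v j = 0 := by
  intro j
  constructor
  · intro hsky
    funext i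
    rcases hv j i with h0 | h2
    · simpa using h0
    · exfalso
      apply hsky.2 (r i)
      · rw [hX]; exact Or.inl ⟨i, rfl⟩
      · constructor
        · intro j'
          rw [he, hr]
          split
          · rename_i hj; subst hj; rw [h2]; norm_num
          · rcases hv j' i with h | h <;> simp [h]
        · exact ⟨j, by rw [he, hr, h2]; simp⟩
  · intro hz
    refine ⟨by rw [hX]; exact Or.inr ⟨j, rfl⟩, ?_⟩
    rintro q hq ⟨hle, j', hlt⟩
    rw [hX] at hq
    rcases hq with ⟨i, rfl⟩ | ⟨k, rfl⟩
    · have := hle j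
      rw [he, hr] at this
      simp [show v j i = 0 from congrFun hz i] at this
      linarith
    · by_cases hkj : k = j
      · subst hkj
        exact lt_irrefl _ hlt
      · have := hle j
        rw [he, he] at this
        simp [show j ≠ k from fun h => hkj h.symm] at this
        linarith
end

section
/- Let ℓ, m ≥ 1 and let v_1,…,v_m : Fin ℓ → ℝ be vectors all of whose entries lie in {0, 2}, each having at most one nonzero coordinate, and which are collision free: for each position i ∈ Fin ℓ there is at most one index j with (v_j)_i ≠ 0. Define the row points r_i ∈ ℝ^m by (r_i)_j = (v_j)_i, the unit points e_j ∈ ℝ^m with (e_j)_j = 1 and zeros elsewhere, and let X = {r_i : i ∈ Fin ℓ} ∪ {e_j : j ∈ Fin m}. Then the skyline of X equals {e_j : v_j = 0} ∪ {r_i : r_i ≠ 0}, and the skyline of X has exactly m elements. -/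
/-- A collision-free block of the lower-bound construction has exactly `m`
skyline points: the unit points of null vectors and the nonzero row points. -/
theorem collision_free_block_skyline
    (ℓ m : ℕ) (hℓ : 1 ≤ ℓ) (hm : 1 ≤ m)
    (v : Fin m → Fin ℓ → ℝ)
    (hv : ∀ j i, v j i = 0 ∨ v j i = 2)
    (hone : ∀ j i i', v j i ≠ 0 → v j i' ≠ 0 → i = i')
    (hcf : ∀ i j j', v j i ≠ 0 → v j' i ≠ 0 → j = j')
    (r : Fin ℓ → Fin m → ℝ) (hr : ∀ i j, r i j = v j i)
    (e : Fin m → Fin m → ℝ)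
    (he : ∀ j j', e j j' = if j' = j then 1 else 0)
    (X : Set (Fin m → ℝ))
    (hX : X = {x | ∃ i, x = r i} ∪ {x | ∃ j, x = e j}) :
    skyline X = {x | ∃ j, v j = 0 ∧ x = e j} ∪ {x | ∃ i, r i ≠ 0 ∧ x = r i} ∧
      (skyline X).ncard = m := by
  classical
  have hrv : ∀ i j, r i j = 0 ∨ r i j = 2 := fun i j => by rw [hr]; exact hv j i
  have hrnn : ∀ i j, (0:ℝ) ≤ r i j := by
    intro i j; rcases hrv i j with h | h <;> rw [h] <;> norm_num
  have he1 : ∀ j, e j j = 1 := fun j => by rw [he]; simp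
  have he0 : ∀ j j', j' ≠ j → e j j' = 0 := fun j j' h => by rw [he]; simp [h]
  have hele : ∀ j j', e j j' ≤ 1 := by
    intro j j'; rw [he]; split <;> norm_num
  have henn : ∀ j j', (0:ℝ) ≤ e j j' := by
    intro j j'; rw [he]; split <;> norm_num
  have hmemX : ∀ x, x ∈ X ↔ (∃ i, x = r i) ∨ (∃ j, x = e j) := by
    intro x; rw [hX]; rfl
  -- a nonzero row has a unique nonzero coordinate, equal to 2
  have H1 : ∀ i, r i ≠ 0 → ∃ j, r i j = 2 ∧ ∀ j', j' ≠ j → r i j' = 0 := by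
    intro i hne
    have hex : ∃ j, r i j ≠ 0 := by
      by_contra h; push_neg at h; exact hne (funext h)
    obtain ⟨j, hj⟩ := hex
    have h2 : r i j = 2 := (hrv i j).resolve_left hj
    refine ⟨j, h2, fun j' hj' => ?_⟩
    by_contra h
    exact hj' (hcf i j' j (by rw [← hr]; exact h) (by rw [← hr]; exact hj))
  -- nonzero rows are in the skyline
  have hr_sky : ∀ i, r i ≠ 0 → r i ∈ skyline X := by
    intro i hne
    obtain ⟨j, h2, -⟩ := H1 i hne
    refine ⟨(hmemX _).mpr (Or.inl ⟨i, rfl⟩), ?_⟩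
    rintro q hq ⟨hle, j', hlt⟩
    rcases (hmemX q).mp hq with ⟨i', rfl⟩ | ⟨j'', rfl⟩
    · have h2' : r i' j = 2 := by
        have hlej := hle j
        rcases hrv i' j with h | h
        · rw [h2, h] at hlej; linarith
        · exact h
      have hii : i = i' := hone j i i' (by rw [← hr, h2]; norm_num)
        (by rw [← hr, h2']; norm_num)
      subst hii
      exact absurd hlt (lt_irrefl _)
    · have hlej := hle j
      have := hele j'' j
      rw [h2] at hlej; linarith
  -- unit points of null vectors are in the skyline
  have he_sky : ∀ j, v j = 0 → e j ∈ skyline X := by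
    intro j hvj
    refine ⟨(hmemX _).mpr (Or.inr ⟨j, rfl⟩), ?_⟩
    rintro q hq ⟨hle, j', hlt⟩
    rcases (hmemX q).mp hq with ⟨i, rfl⟩ | ⟨j'', rfl⟩
    · have h := hle j
      rw [he1, hr, hvj] at h
      simp at h
      linarith
    · have h := hle j
      rw [he1] at h
      have hjj : j'' = j := by
        by_contra hne
        have h0 : e j'' j = 0 := he0 j'' j (fun hc => hne hc.symm)
        rw [h0] at h; linarith
      subst hjj
      exact absurd hlt (lt_irrefl _)
  -- skyline is contained in the union
  have fwd : skyline X ⊆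
      {x | ∃ j, v j = 0 ∧ x = e j} ∪ {x | ∃ i, r i ≠ 0 ∧ x = r i} := by
    rintro x ⟨hxX, hnd⟩
    rcases (hmemX x).mp hxX with ⟨i, rfl⟩ | ⟨j, rfl⟩
    · right
      refine ⟨i, ?_, rfl⟩
      intro h0
      have j0 : Fin m := ⟨0, hm⟩
      apply hnd (e j0) ((hmemX _).mpr (Or.inr ⟨j0, rfl⟩))
      constructor
      · intro j; rw [h0]; simpa using henn j0 j
      · refine ⟨j0, ?_⟩
        rw [h0, he1]
        simp
    · left
      refine ⟨j, ?_, rfl⟩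
      by_contra hvj
      have hex : ∃ i, v j i ≠ 0 := by
        by_contra h; push_neg at h; exact hvj (funext h)
      obtain ⟨i, hi⟩ := hex
      have h2 : v j i = 2 := (hv j i).resolve_left hi
      apply hnd (r i) ((hmemX _).mpr (Or.inl ⟨i, rfl⟩))
      constructor
      · intro j'
        by_cases hjj : j' = j
        · subst hjj; rw [he1, hr, h2]; norm_num
        · rw [he0 j j' hjj]; exact hrnn i j'
      · exact ⟨j, by rw [he1, hr, h2]; norm_num⟩
  have bwd : {x | ∃ j, v j = 0 ∧ x = e j} ∪ {x | ∃ i, r i ≠ 0 ∧ x = r i}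
      ⊆ skyline X := by
    rintro x (⟨j, hvj, rfl⟩ | ⟨i, hne, rfl⟩)
    · exact he_sky j hvj
    · exact hr_sky i hne
  have hEq : skyline X =
      {x | ∃ j, v j = 0 ∧ x = e j} ∪ {x | ∃ i, r i ≠ 0 ∧ x = r i} :=
    Set.Subset.antisymm fwd bwd
  refine ⟨hEq, ?_⟩
  -- cardinality
  have hchoice : ∀ j : Fin m, v j ≠ 0 → ∃ i, v j i = 2 := by
    intro j h
    have hex : ∃ i, v j i ≠ 0 := by
      by_contra hc; push_neg at hc; exact h (funext hc)
    obtain ⟨i, hi⟩ := hex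
    exact ⟨i, (hv j i).resolve_left hi⟩
  let g : Fin m → (Fin m → ℝ) :=
    fun j => if h : v j = 0 then e j else r (hchoice j h).choose
  have hgspec : ∀ j, (v j = 0 ∧ g j = e j) ∨ ∃ i, v j i = 2 ∧ g j = r i := by
    intro j
    by_cases h : v j = 0
    · left; exact ⟨h, by simp [g, h]⟩
    · right; exact ⟨(hchoice j h).choose, (hchoice j h).choose_spec, by simp [g, h]⟩
  have hUr : {x | ∃ j, v j = 0 ∧ x = e j} ∪ {x | ∃ i, r i ≠ 0 ∧ x = r i}
      = Set.range g := by
    ext x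
    constructor
    · rintro (⟨j, hvj, rfl⟩ | ⟨i, hne, rfl⟩)
      · exact ⟨j, by simp [g, hvj]⟩
      · obtain ⟨j, h2, -⟩ := H1 i hne
        have hvj : v j ≠ 0 := by
          intro h
          have hc := hr i j
          rw [h2, h] at hc
          simp at hc
        refine ⟨j, ?_⟩
        rcases hgspec j with ⟨h0, -⟩ | ⟨i', h2', hg'⟩
        · exact absurd h0 hvj
        · rw [hg']
          have : i' = i := hone j i' i (by rw [h2']; norm_num)
            (by rw [← hr, h2]; norm_num)
          rw [this]
    · rintro ⟨j, rfl⟩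
      rcases hgspec j with ⟨h0, hg'⟩ | ⟨i, h2, hg'⟩
      · left; exact ⟨j, h0, hg'⟩
      · right
        refine ⟨i, ?_, hg'⟩
        intro h0
        have hc : r i j = 0 := by rw [h0]; rfl
        rw [hr, h2] at hc
        norm_num at hc
  have hginj : Function.Injective g := by
    intro a b hab
    rcases hgspec a with ⟨ha0, hga⟩ | ⟨ia, h2a, hga⟩ <;>
      rcases hgspec b with ⟨hb0, hgb⟩ | ⟨ib, h2b, hgb⟩
    · rw [hga, hgb] at hab
      by_contra hne
      have h := congrFun hab a
      rw [he1, he0 b a hne] at h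
      norm_num at h
    · rw [hga, hgb] at hab
      have h := congrFun hab b
      rw [hr, h2b] at h
      have := hele a b
      rw [h] at this
      norm_num at this
    · rw [hga, hgb] at hab
      have h := congrFun hab a
      rw [hr, h2a] at h
      have := hele b a
      rw [← h] at this
      norm_num at this
    · rw [hga, hgb] at hab
      have h := congrFun hab a
      rw [hr, hr, h2a] at h
      exact hcf ib a b (by rw [← h]; norm_num) (by rw [h2b]; norm_num)
  rw [hEq, hUr, ← Set.image_univ, Set.ncard_image_of_injective _ hginj,
    Set.ncard_univ, Nat.card_eq_fintype_card, Fintype.card_fin]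
end

section
/- Let ℓ, m ≥ 1 and let v_1,…,v_m : Fin ℓ → ℝ be vectors all of whose entries lie in {0, 2}, each having at most one nonzero coordinate. Define the row points r_i ∈ ℝ^m by (r_i)_j = (v_j)_i, the unit points e_j ∈ ℝ^m with (e_j)_j = 1 and zeros elsewhere, and let X = {r_i : i ∈ Fin ℓ} ∪ {e_j : j ∈ Fin m}. Then the skyline of X has at most m elements. -/
/-- Regardless of collisions, a block of the lower-bound construction
contains at most `m` skyline points. -/
theorem block_skyline_card_le
    (ℓ m : ℕ) (hℓ : 1 ≤ ℓ) (hm : 1 ≤ m)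
    (v : Fin m → Fin ℓ → ℝ)
    (hv : ∀ j i, v j i = 0 ∨ v j i = 2)
    (hone : ∀ j i i', v j i ≠ 0 → v j i' ≠ 0 → i = i')
    (r : Fin ℓ → Fin m → ℝ) (hr : ∀ i j, r i j = v j i)
    (e : Fin m → Fin m → ℝ)
    (he : ∀ j j', e j j' = if j' = j then 1 else 0)
    (X : Set (Fin m → ℝ))
    (hX : X = {x | ∃ i, x = r i} ∪ {x | ∃ j, x = e j}) :
    (skyline X).ncard ≤ m := by
  classical
  -- domination: a row with a 2 in column j strictly dominates e j
  have hdom : ∀ i j, v j i = 2 → StrictlyDominates (r i) (e j) := by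
    intro i j hij
    constructor
    · intro j'
      rw [he, hr]
      by_cases h : j' = j
      · subst h; rw [if_pos rfl, hij]; norm_num
      · rw [if_neg h]
        rcases hv j' i with h0 | h2
        · rw [h0]
        · rw [h2]; norm_num
    · exact ⟨j, by rw [he, hr, if_pos rfl, hij]; norm_num⟩
  -- every skyline point has a nonzero coordinate
  have key : ∀ p ∈ skyline X, ∃ j, p j ≠ 0 := by
    intro p hp
    by_contra hz
    push_neg at hz
    have he0 : e ⟨0, hm⟩ ∈ X := by rw [hX]; exact Or.inr ⟨_, rfl⟩
    refine hp.2 _ he0 ⟨fun j => ?_, ⟨⟨0, hm⟩, ?_⟩⟩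
    · rw [hz j, he]; split <;> norm_num
    · rw [hz, he, if_pos rfl]; norm_num
  -- the map
  set f : (Fin m → ℝ) → Fin m := fun p =>
    if h : ∃ j, p j ≠ 0 then h.choose else ⟨0, hm⟩ with hf
  have hfspec : ∀ p ∈ skyline X, p (f p) ≠ 0 := by
    intro p hp
    have h := key p hp
    rw [hf]; simp only [dif_pos h]; exact h.choose_spec
  -- classify: if x ∈ skyline and x j ≠ 0, then either a row with v j ≠ 0 or e j
  have hclass : ∀ p ∈ skyline X, ∀ j, p j ≠ 0 →
      (∃ i, p = r i ∧ v j i ≠ 0) ∨ p = e j := by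
    intro p hp j hj
    have hpx := hp.1
    rw [hX] at hpx
    rcases hpx with ⟨i, hi⟩ | ⟨j', hj'⟩
    · exact Or.inl ⟨i, hi, by rw [hi, hr] at hj; exact hj⟩
    · right
      rw [hj'] at hj ⊢
      rw [he] at hj
      by_cases h : j = j'
      · rw [h]
      · exact absurd (if_neg h) hj
  have hinj : Set.InjOn f (skyline X) := by
    intro p hp p' hp' hpp
    have h1 := hfspec p hp
    have h2 := hfspec p' hp'
    rw [hpp] at h1
    set j := f p' with hj
    rcases hclass p hp j h1 with ⟨i, hpi, hvi⟩ | hpe <;>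
      rcases hclass p' hp' j h2 with ⟨i', hpi', hvi'⟩ | hpe'
    · rw [hpi, hpi', hone j i i' hvi hvi']
    · -- p = r i dominates p' = e j, contradiction with p' ∈ skyline
      exfalso
      have h2' : v j i = 2 := (hv j i).resolve_left hvi
      exact hp'.2 (r i) (by rw [← hpi]; exact hp.1) (by rw [hpe']; exact hdom i j h2')
    · exfalso
      have h2' : v j i' = 2 := (hv j i').resolve_left hvi'
      exact hp.2 (r i') (by rw [← hpi']; exact hp'.1) (by rw [hpe]; exact hdom i' j h2')
    · rw [hpe, hpe']
  calc (skyline X).ncard ≤ (Set.univ : Set (Fin m)).ncard := by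
        refine Set.ncard_le_ncard_of_injOn f (fun a _ => Set.mem_univ _) hinj Set.finite_univ
    _ = m := by simp [Set.ncard_univ]
end
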